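/- Let k ≥ 1 be an integer and let G be a graph with n vertices and minimum degree at least 2k−1. If G has a perfect matching, then γ_{k−1,k}(G) ≤ ((2k−1)/(2k))·n. -/

import Mathlib

open SimpleGraph Finset

lemma aux_choose_half (s : ℕ) : 2 * Nat.choose (2*s+2) s ≤ 2 ^ (2*s+2) := by
  have h1 : Nat.choose (2*s+2) s ≤ Nat.choose (2*s+2) (s+1) :=
    Nat.choose_le_succ_of_lt_half_left (by omega)
  have h2 : Nat.choose (2*s+2) s + Nat.choose (2*s+2) (s+1) ≤ 2 ^ (2*s+2) := by
    calc Nat.choose (2*s+2) s + Nat.choose (2*s+2) (s+1)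
        = ∑ r ∈ ({s, s+1} : Finset ℕ), Nat.choose (2*s+2) r := by
          rw [Finset.sum_insert (by simp), Finset.sum_singleton]
      _ ≤ ∑ r ∈ Finset.range (2*s+3), Nat.choose (2*s+2) r := by
          apply Finset.sum_le_sum_of_subset
          intro x hx
          simp only [mem_insert, mem_singleton] at hx
          rcases hx with h|h <;> simp [h, Finset.mem_range] <;> omega
      _ = 2 ^ (2*s+2) := by
          have := Nat.sum_range_choose (2*s+2)
          simpa using this
  omega
lemma aux_base (k s : ℕ) (hk : 2 ≤ k) (hs : s + 2 ≤ k) :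
    2 * Nat.choose (2*s+2) s ≤ k ^ (s+1) := by
  rcases Nat.lt_or_ge k 4 with hk4 | hk4
  · have hs1 : s ≤ 1 := by omega
    rcases Nat.le_one_iff_eq_zero_or_eq_one.mp hs1 with rfl | rfl
    · simpa [Nat.choose] using hk
    · have hk3 : k = 3 := by omega
      subst hk3
      norm_num [Nat.choose]
  · calc 2 * Nat.choose (2*s+2) s ≤ 2 ^ (2*s+2) := aux_choose_half s
      _ = 4 ^ (s+1) := by rw [show (4:ℕ) = 2^2 by norm_num, ← pow_mul]; ring_nf
      _ ≤ k ^ (s+1) := Nat.pow_le_pow_left hk4 _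
lemma aux_binom (k s b : ℕ) (hk : 2 ≤ k) (hs : s + 2 ≤ k) (hb : 2*s+2 ≤ b) :
    2 * Nat.choose b s ≤ k ^ (b - s - 1) := by
  induction b with
  | zero => omega
  | succ b ih =>
    rcases Nat.lt_or_ge b (2*s+2) with h | h
    · have hb' : b + 1 = 2*s+2 := by omega
      rw [hb']
      have := aux_base k s hk hs
      have he : 2*s+2 - s - 1 = s + 1 := by omega
      rw [he]; exact this
    · have ih' := ih h
      have hstep : Nat.choose (b+1) s ≤ 2 * Nat.choose b s := by
        cases s with
        | zero => simp
        | succ s' =>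
          have hp : Nat.choose (b+1) (s'+1) = Nat.choose b s' + Nat.choose b (s'+1) :=
            Nat.choose_succ_succ b s'
          have hmono : Nat.choose b s' ≤ Nat.choose b (s'+1) :=
            Nat.choose_le_succ_of_lt_half_left (by omega)
          omega
      calc 2 * Nat.choose (b+1) s ≤ 2 * (2 * Nat.choose b s) := by omega
        _ ≤ 2 * k ^ (b - s - 1) := by omega
        _ ≤ k * k ^ (b - s - 1) := Nat.mul_le_mul_right _ hk
        _ = k ^ (b + 1 - s - 1) := by
            rw [← pow_succ']
            congr 1
            omega


lemma aux_sub_le_choose (W t : ℕ) : W - t ≤ W.choose (t+1) := by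
  induction W generalizing t with
  | zero => simp
  | succ w ih =>
    cases t with
    | zero => simp
    | succ t' =>
      have h1 := ih t'
      have hp : (w+1).choose (t'+1+1) = w.choose (t'+1) + w.choose (t'+1+1) :=
        Nat.choose_succ_succ w (t'+1)
      omega

lemma aux_count_fixed {V : Type*} [Fintype V] [DecidableEq V] (k : ℕ) [NeZero k]
    (C : Finset V) (h : V → Fin k) :
    (Finset.univ.filter fun ω : V → Fin k => ∀ c ∈ C, ω c = h c).card
      = k ^ (Fintype.card V - C.card) := by
  classical
  have hset : (Finset.univ.filter fun ω : V → Fin k => ∀ c ∈ C, ω c = h c)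
      = Fintype.piFinset (fun c => if c ∈ C then {h c} else Finset.univ) := by
    ext ω
    simp only [Finset.mem_filter, Finset.mem_univ, true_and, Fintype.mem_piFinset]
    constructor
    · intro hω c
      by_cases hc : c ∈ C
      · simp [hc, hω c hc]
      · simp [hc]
    · intro hω c hc
      have := hω c
      simpa [hc] using this
  rw [hset, Fintype.card_piFinset]
  rw [← Finset.prod_filter_mul_prod_filter_not Finset.univ (· ∈ C)]
  have h1 : Finset.univ.filter (· ∈ C) = C := by ext x; simp
  have h2 : ∀ x ∈ Finset.univ.filter (fun c => ¬ c ∈ C),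
      ((if x ∈ C then ({h x} : Finset (Fin k)) else Finset.univ)).card = k := by
    intro x hx
    simp only [Finset.mem_filter] at hx
    simp [hx.2]
  rw [Finset.prod_congr rfl h2]
  have h3 : ∀ x ∈ C, ((if x ∈ C then ({h x} : Finset (Fin k)) else Finset.univ)).card = 1 := by
    intro x hx; simp [hx]
  rw [h1, Finset.prod_congr rfl h3]
  simp only [Finset.prod_const, one_pow, one_mul]
  congr 1
  rw [Finset.filter_not, h1]
  rw [Finset.card_sdiff_of_subset (Finset.subset_univ C)]
  simp

section Core
variable {V : Type*} [Fintype V] [DecidableEq V] (G : SimpleGraph V) [DecidableRel G.Adj]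

lemma core_exists (k : ℕ) (hk2 : 2 ≤ k) (hV : Nonempty V)
    (p : V → V) (hGadj : ∀ v, G.Adj v (p v)) (hpp : ∀ v, p (p v) = v)
    (hpinj : Function.Injective p)
    (hdeg : ∀ v, 2 * k - 1 ≤ G.degree v)
    (A : Finset V) (hAxor : ∀ v, (p v ∈ A) ↔ v ∉ A)
    (aux_binom : ∀ s b : ℕ, s + 2 ≤ k → 2*s+2 ≤ b → 2 * Nat.choose b s ≤ k ^ (b - s - 1)) :
    ∃ D : Finset V, (∀ v ∈ D, p v ∉ D) ∧
      (∀ v : V, k - 1 ≤ (((G.neighborFinset v).erase (p v)) \ D).card) ∧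
      Fintype.card V ≤ 2 * k * D.card := by
  classical
  haveI : NeZero k := ⟨by omega⟩
  set n := Fintype.card V with hn
  have hn1 : 1 ≤ n := Fintype.card_pos
  set zer : Fin k := ⟨0, by omega⟩ with hzer
  set one : Fin k := ⟨1, by omega⟩ with hone
  have hzo : zer ≠ one := by
    simp only [hzer, hone, Ne, Fin.mk.injEq]
    omega
  set rep : V → V := fun u => if u ∈ A then u else p u with hrep
  set val : V → Fin k := fun u => if u ∈ A then zer else one with hval
  set D0 : (V → Fin k) → Finset V :=
    fun ω => Finset.univ.filter (fun v => ω (rep v) = val v) with hD0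
  have hmem : ∀ (ω : V → Fin k) (v), v ∈ D0 ω ↔ ω (rep v) = val v := by
    intro ω v; simp [hD0]
  have hpvmem : ∀ v, p v ∈ G.neighborFinset v := by
    intro v; rw [SimpleGraph.mem_neighborFinset]; exact hGadj v
  have htrans : ∀ (ω : V → Fin k) (v), v ∈ D0 ω → p v ∉ D0 ω := by
    intro ω v hv hpv
    rw [hmem] at hv hpv
    by_cases hvA : v ∈ A
    · have hpvA : p v ∉ A := fun h => ((hAxor v).mp h) hvA
      rw [hrep, hval] at hv hpv
      simp only [hvA, if_pos, if_true] at hv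
      simp only [hpvA, if_neg, if_false, hpp] at hpv
      rw [hv] at hpv
      exact hzo hpv
    · have hpvA : p v ∈ A := (hAxor v).mpr hvA
      rw [hrep, hval] at hv hpv
      simp only [hvA, if_neg, if_false] at hv
      simp only [hpvA, if_pos, if_true] at hpv
      rw [hpv] at hv
      exact hzo hv
  -- counting: sum of |D0| over all configurations
  have hfc : Fintype.card (V → Fin k) = k ^ n := by
    rw [Fintype.card_fun, Fintype.card_fin]
  have hcount1 : ∀ u : V,
      (Finset.univ.filter fun ω : V → Fin k => ω (rep u) = val u).card = k ^ (n - 1) := by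
    intro u
    have h1 := aux_count_fixed (V := V) k {rep u} (fun _ => val u)
    have h2 : (Finset.univ.filter fun ω : V → Fin k => ∀ c ∈ ({rep u} : Finset V), ω c = val u)
        = (Finset.univ.filter fun ω : V → Fin k => ω (rep u) = val u) := by
      apply Finset.filter_congr
      intro ω _
      simp
    rw [h2] at h1
    simpa using h1
  have hsumD0 : ∑ ω : V → Fin k, (D0 ω).card = n * k ^ (n - 1) := by
    have h1 : ∀ ω : V → Fin k, (D0 ω).card
        = ∑ v : V, (if ω (rep v) = val v then 1 else 0) := by
      intro ω
      rw [hD0]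
      exact Finset.card_filter _ _
    calc ∑ ω : V → Fin k, (D0 ω).card
        = ∑ ω : V → Fin k, ∑ v : V, (if ω (rep v) = val v then 1 else 0) :=
          Finset.sum_congr rfl (fun ω _ => h1 ω)
      _ = ∑ v : V, ∑ ω : V → Fin k, (if ω (rep v) = val v then 1 else 0) :=
          Finset.sum_comm
      _ = ∑ v : V, k ^ (n - 1) := by
          apply Finset.sum_congr rfl
          intro v _
          rw [← Finset.card_filter]
          exact hcount1 v
      _ = n * k ^ (n - 1) := by
          rw [Finset.sum_const, Finset.card_univ, smul_eq_mul]
  -- the deficiency function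
  set R : V → (V → Fin k) → ℕ :=
    fun v ω => (k - 1) - (((G.neighborFinset v).erase (p v)) \ D0 ω).card with hR
  -- KEY per-vertex bound (proved below)
  have hRsum : ∀ v : V, 2 * ∑ ω : V → Fin k, R v ω ≤ k ^ (n - 1) := by
    intro v
    have hvNB : v ∉ G.neighborFinset v := by
      rw [SimpleGraph.mem_neighborFinset]
      exact G.irrefl
    set NB := G.neighborFinset v with hNB
    set E := NB.erase (p v) with hE
    have hEcard : E.card = G.degree v - 1 := by
      rw [hE, Finset.card_erase_of_mem (hpvmem v)]
      rfl
    set Sgl := E.filter (fun u => ¬ p u ∈ NB) with hSgl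
    set Dbl := E.filter (fun u => p u ∈ NB) with hDbl
    set b := Sgl.card with hb
    have hDblclosed : ∀ u ∈ Dbl, p u ∈ Dbl := by
      intro u hu
      rw [hDbl, Finset.mem_filter, hE, Finset.mem_erase] at hu
      have huv : u ≠ v := fun h => hvNB (h ▸ hu.1.2)
      rw [hDbl, Finset.mem_filter, hE, Finset.mem_erase]
      refine ⟨⟨fun h => huv (hpinj h), hu.2⟩, ?_⟩
      rw [hpp]
      exact hu.1.2
    set DblA := Dbl.filter (· ∈ A) with hDblA
    set a := DblA.card with ha
    have hDbl2 : Dbl.card = 2 * a := by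
      have hbij : (Dbl.filter (fun u => ¬ u ∈ A)).card = a := by
        apply Finset.card_bij' (fun u _ => p u) (fun u _ => p u)
        · intro u hu
          rw [Finset.mem_filter] at hu
          rw [hDblA, Finset.mem_filter]
          exact ⟨hDblclosed u hu.1, (hAxor u).mpr hu.2⟩
        · intro u hu
          rw [hDblA, Finset.mem_filter] at hu
          rw [Finset.mem_filter]
          refine ⟨hDblclosed u hu.1, fun h => ?_⟩
          exact ((hAxor u).mp h) hu.2
        · intro u _; exact hpp u
        · intro u _; exact hpp u
      have hsplit := Finset.card_filter_add_card_filter_not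
        (s := Dbl) (p := (· ∈ A))
      rw [hbij] at hsplit
      rw [← hDblA] at hsplit
      omega
    have hba : b + 2 * a = G.degree v - 1 := by
      have hsplit := Finset.card_filter_add_card_filter_not
        (s := E) (p := fun u => p u ∈ NB)
      rw [← hDbl] at hsplit
      have hSgl' : E.filter (fun u => ¬ p u ∈ NB) = Sgl := rfl
      rw [hSgl'] at hsplit
      omega
    have hdv := hdeg v
    -- bound on outside count
    have hYbound : ∀ ω : V → Fin k,
        a + (b - (Sgl ∩ D0 ω).card) ≤ (E \ D0 ω).card := by
      intro ω
      have hsplit : E \ D0 ω = (Sgl \ D0 ω) ∪ (Dbl \ D0 ω) := by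
        ext x
        simp only [Finset.mem_sdiff, Finset.mem_union, hSgl, hDbl, Finset.mem_filter]
        tauto
      have hdisj : Disjoint (Sgl \ D0 ω) (Dbl \ D0 ω) := by
        rw [Finset.disjoint_left]
        intro x hx hx2
        rw [Finset.mem_sdiff, hSgl, Finset.mem_filter] at hx
        rw [Finset.mem_sdiff, hDbl, Finset.mem_filter] at hx2
        exact hx.1.2 hx2.1.2
      have hcard : (E \ D0 ω).card = (Sgl \ D0 ω).card + (Dbl \ D0 ω).card := by
        rw [hsplit, Finset.card_union_of_disjoint hdisj]
      have h1 := Finset.card_inter_add_card_sdiff Sgl (D0 ω)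
      have h2 := Finset.card_inter_add_card_sdiff Dbl (D0 ω)
      have h3 : (Dbl ∩ D0 ω).card ≤ a := by
        apply Finset.card_le_card_of_injOn rep
        · intro u hu
          rw [Finset.mem_coe, Finset.mem_inter] at hu
          rw [Finset.mem_coe, hDblA, Finset.mem_filter]
          by_cases huA : u ∈ A
          · rw [hrep]
            simp only [huA, if_true]
            exact ⟨hu.1, trivial⟩
          · rw [hrep]
            simp only [huA, if_false]
            exact ⟨hDblclosed u hu.1, (hAxor u).mpr huA⟩
        · intro x hx y hy hxy
          simp only [Finset.coe_inter, Set.mem_inter_iff, Finset.mem_coe] at hx hy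
          rw [hrep] at hxy
          by_cases hxA : x ∈ A <;> by_cases hyA : y ∈ A
          · simpa [hxA, hyA] using hxy
          · exfalso
            simp only [hxA, hyA, if_true, if_false] at hxy
            apply htrans ω y hy.2
            rw [← hxy]
            exact hx.2
          · exfalso
            simp only [hxA, hyA, if_true, if_false] at hxy
            apply htrans ω x hx.2
            rw [hxy]
            exact hy.2
          · simp only [hxA, hyA, if_false] at hxy
            exact hpinj hxy
      omega
    -- reduce to binomial coefficients
    set j := b + a + 2 - k with hj
    have hbak : k ≤ b + a + 1 := by omega
    have hrchoose : ∀ ω : V → Fin k, R v ω ≤ Nat.choose ((Sgl ∩ D0 ω).card) j := by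
      intro ω
      have hW : (Sgl ∩ D0 ω).card ≤ b := Finset.card_le_card Finset.inter_subset_left
      have h1 := aux_sub_le_choose ((Sgl ∩ D0 ω).card) (j - 1)
      have hjj : (j - 1) + 1 = j := by omega
      rw [hjj] at h1
      have hYb := hYbound ω
      have h4 : R v ω = (k - 1) - (E \ D0 ω).card := rfl
      have h2 : R v ω ≤ (Sgl ∩ D0 ω).card - (j - 1) := by omega
      exact le_trans h2 h1
    have hSglNoPair : ∀ u ∈ Sgl, p u ∉ Sgl := by
      intro u hu hpu
      rw [hSgl, Finset.mem_filter] at hu hpu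
      exact hu.2 (Finset.mem_of_mem_erase hpu.1)
    have hsumchoose : ∑ ω : V → Fin k, Nat.choose ((Sgl ∩ D0 ω).card) j
        = (Nat.choose b j) * k ^ (n - j) := by
      have hstep1 : ∀ ω : V → Fin k, Nat.choose ((Sgl ∩ D0 ω).card) j
          = ((Finset.powersetCard j Sgl).filter (fun T => T ⊆ D0 ω)).card := by
        intro ω
        rw [← Finset.card_powersetCard]
        congr 1
        ext T
        simp only [Finset.mem_powersetCard, Finset.mem_filter, Finset.subset_inter_iff]
        tauto
      have hstep2 : ∀ T ∈ Finset.powersetCard j Sgl,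
          (Finset.univ.filter (fun ω : V → Fin k => T ⊆ D0 ω)).card = k ^ (n - j) := by
        intro T hT
        rw [Finset.mem_powersetCard] at hT
        obtain ⟨hTs, hTc⟩ := hT
        have hnoPairT : ∀ u ∈ T, p u ∉ T :=
          fun u hu hpu => hSglNoPair u (hTs hu) (hTs hpu)
        have hinj : Set.InjOn rep ↑T := by
          intro x hx y hy hxy
          rw [Finset.mem_coe] at hx hy
          rw [hrep] at hxy
          by_cases hxA : x ∈ A <;> by_cases hyA : y ∈ A
          · simpa [hxA, hyA] using hxy
          · exfalso
            simp only [hxA, hyA, if_true, if_false] at hxy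
            apply hnoPairT y hy
            rw [← hxy]
            exact hx
          · exfalso
            simp only [hxA, hyA, if_true, if_false] at hxy
            apply hnoPairT x hx
            rw [hxy]
            exact hy
          · simp only [hxA, hyA, if_false] at hxy
            exact hpinj hxy
        set hfun : V → Fin k := fun c => if c ∈ T then val c else val (p c) with hhfun
        have hvalrep : ∀ u ∈ T, hfun (rep u) = val u := by
          intro u hu
          by_cases huA : u ∈ A
          · rw [hrep, hhfun]
            simp only [huA, if_true, hu, if_pos]
          · rw [hrep, hhfun]
            have hpuT : p u ∉ T := hnoPairT u hu
            simp only [huA, if_false, hpuT, hpp]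
        have hcond : ∀ ω : V → Fin k,
            (T ⊆ D0 ω) ↔ (∀ c ∈ T.image rep, ω c = hfun c) := by
          intro ω
          constructor
          · intro hsub c hc
            obtain ⟨u, hu, rfl⟩ := Finset.mem_image.mp hc
            rw [hvalrep u hu]
            exact (hmem ω u).mp (hsub hu)
          · intro hcc u hu
            rw [hmem]
            rw [← hvalrep u hu]
            exact hcc (rep u) (Finset.mem_image_of_mem rep hu)
        have hcnt := aux_count_fixed (V := V) k (T.image rep) hfun
        have heq : (Finset.univ.filter (fun ω : V → Fin k => T ⊆ D0 ω))
            = (Finset.univ.filter fun ω : V → Fin k => ∀ c ∈ T.image rep, ω c = hfun c) := by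
          apply Finset.filter_congr
          intro ω _
          exact iff_iff_eq.mp (hcond ω) ▸ Iff.rfl
        rw [heq, hcnt, Finset.card_image_of_injOn hinj, hTc]
      calc ∑ ω : V → Fin k, Nat.choose ((Sgl ∩ D0 ω).card) j
          = ∑ ω : V → Fin k, ((Finset.powersetCard j Sgl).filter (fun T => T ⊆ D0 ω)).card :=
            Finset.sum_congr rfl (fun ω _ => hstep1 ω)
        _ = ∑ ω : V → Fin k, ∑ T ∈ Finset.powersetCard j Sgl, (if T ⊆ D0 ω then 1 else 0) :=
            Finset.sum_congr rfl (fun ω _ => Finset.card_filter _ _)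
        _ = ∑ T ∈ Finset.powersetCard j Sgl, ∑ ω : V → Fin k, (if T ⊆ D0 ω then 1 else 0) :=
            Finset.sum_comm
        _ = ∑ T ∈ Finset.powersetCard j Sgl, k ^ (n - j) := by
            apply Finset.sum_congr rfl
            intro T hT
            rw [← Finset.card_filter]
            exact hstep2 T hT
        _ = (Nat.choose b j) * k ^ (n - j) := by
            rw [Finset.sum_const, Finset.card_powersetCard, smul_eq_mul, hb]
    have hsumR : ∑ ω : V → Fin k, R v ω ≤ (Nat.choose b j) * k ^ (n - j) := by
      rw [← hsumchoose]
      exact Finset.sum_le_sum (fun ω _ => hrchoose ω)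
    rcases lt_or_ge b j with hbj | hbj
    · have hchoose0 : Nat.choose b j = 0 := Nat.choose_eq_zero_of_lt hbj
      rw [hchoose0] at hsumR
      simp only [Nat.zero_mul, Nat.le_zero] at hsumR
      rw [hsumR]
      exact Nat.zero_le _
    · set s := b - j with hs
      have hCsym : Nat.choose b s = Nat.choose b j := by
        rw [hs]
        exact Nat.choose_symm hbj
      have hs2 : s + 2 ≤ k := by omega
      have hsb : 2 * s + 2 ≤ b := by omega
      have hbin := aux_binom s b hs2 hsb
      have hjn : j ≤ n := le_trans hbj (le_trans (by rw [hb]) (Finset.card_le_univ Sgl))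
      have hpow : k ^ (b - s - 1) * k ^ (n - j) = k ^ (n - 1) := by
        rw [← pow_add]
        congr 1
        omega
      calc 2 * ∑ ω : V → Fin k, R v ω
          ≤ 2 * ((Nat.choose b j) * k ^ (n - j)) := by omega
        _ = (2 * Nat.choose b s) * k ^ (n - j) := by rw [hCsym]; ring
        _ ≤ k ^ (b - s - 1) * k ^ (n - j) := Nat.mul_le_mul_right _ hbin
        _ = k ^ (n - 1) := hpow
  -- repaired set for each configuration
  have hed : ∀ (v : V) (ω : V → Fin k),
      R v ω ≤ (((G.neighborFinset v).erase (p v)) ∩ D0 ω).card := by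
    intro v ω
    have h1 := Finset.card_inter_add_card_sdiff ((G.neighborFinset v).erase (p v)) (D0 ω)
    have h2 : ((G.neighborFinset v).erase (p v)).card = G.degree v - 1 := by
      rw [Finset.card_erase_of_mem (hpvmem v)]
      rfl
    have h3 := hdeg v
    have h4 : R v ω = (k - 1) - (((G.neighborFinset v).erase (p v)) \ D0 ω).card := rfl
    omega
  have hex2 : ∀ ω : V → Fin k, ∃ D' : Finset V, D' ⊆ D0 ω ∧
      (∀ v : V, k - 1 ≤ (((G.neighborFinset v).erase (p v)) \ D').card) ∧
      (D0 ω).card ≤ D'.card + ∑ v : V, R v ω := by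
    intro ω
    have hBex : ∀ v : V, ∃ B, B ⊆ ((G.neighborFinset v).erase (p v)) ∩ D0 ω ∧ B.card = R v ω :=
      fun v => Finset.exists_subset_card_eq (hed v ω)
    choose B hBsub hBcard using hBex
    refine ⟨D0 ω \ Finset.univ.biUnion B, Finset.sdiff_subset, ?_, ?_⟩
    · intro v
      have hsub : (((G.neighborFinset v).erase (p v)) \ D0 ω) ∪ B v
          ⊆ ((G.neighborFinset v).erase (p v)) \ (D0 ω \ Finset.univ.biUnion B) := by
        intro x hx
        rcases Finset.mem_union.mp hx with hx | hx
        · rw [Finset.mem_sdiff] at hx ⊢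
          exact ⟨hx.1, fun hmem => hx.2 (Finset.mem_sdiff.mp hmem).1⟩
        · have hxE := (Finset.mem_inter.mp (hBsub v hx)).1
          rw [Finset.mem_sdiff]
          refine ⟨hxE, fun hmem => ?_⟩
          exact (Finset.mem_sdiff.mp hmem).2
            (Finset.mem_biUnion.mpr ⟨v, Finset.mem_univ v, hx⟩)
      have hdisj : Disjoint (((G.neighborFinset v).erase (p v)) \ D0 ω) (B v) := by
        rw [Finset.disjoint_left]
        intro x hx hxB
        exact (Finset.mem_sdiff.mp hx).2 (Finset.mem_inter.mp (hBsub v hxB)).2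
      have hcsub := Finset.card_le_card hsub
      rw [Finset.card_union_of_disjoint hdisj, hBcard] at hcsub
      have h4 : R v ω = (k - 1) - (((G.neighborFinset v).erase (p v)) \ D0 ω).card := rfl
      omega
    · have h1 : (Finset.univ.biUnion B).card ≤ ∑ v : V, R v ω := by
        refine le_trans Finset.card_biUnion_le ?_
        exact le_of_eq (Finset.sum_congr rfl (fun v _ => hBcard v))
      have h2 := Finset.le_card_sdiff (Finset.univ.biUnion B) (D0 ω)
      omega
  choose Df hDfsub hDfE hDfcard using hex2
  -- sum everything
  have hsum2 : ∑ ω : V → Fin k, ∑ v : V, R v ω = ∑ v : V, ∑ ω : V → Fin k, R v ω :=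
    Finset.sum_comm
  have hsum3 : 2 * ∑ v : V, ∑ ω : V → Fin k, R v ω ≤ n * k ^ (n - 1) := by
    calc 2 * ∑ v : V, ∑ ω : V → Fin k, R v ω
        = ∑ v : V, 2 * ∑ ω : V → Fin k, R v ω := by rw [Finset.mul_sum]
      _ ≤ ∑ v : V, k ^ (n - 1) := Finset.sum_le_sum (fun v _ => hRsum v)
      _ = n * k ^ (n - 1) := by rw [Finset.sum_const, Finset.card_univ, smul_eq_mul]
  have hsum1 : ∑ ω : V → Fin k, (D0 ω).card
      ≤ (∑ ω : V → Fin k, (Df ω).card) + ∑ ω : V → Fin k, ∑ v : V, R v ω := by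
    rw [← Finset.sum_add_distrib]
    exact Finset.sum_le_sum (fun ω _ => hDfcard ω)
  have hglobal : n * k ^ (n - 1) ≤ 2 * ∑ ω : V → Fin k, (Df ω).card := by
    omega
  -- pigeonhole
  have hfin : ∃ ω : V → Fin k, n ≤ 2 * k * (Df ω).card := by
    by_contra hcon
    push_neg at hcon
    have h1 : ∑ ω : V → Fin k, (2 * k * (Df ω).card) ≤ (n - 1) * k ^ n := by
      calc ∑ ω : V → Fin k, (2 * k * (Df ω).card)
          ≤ ∑ _ω : V → Fin k, (n - 1) := by
            refine Finset.sum_le_sum (fun ω _ => ?_)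
            have := hcon ω
            omega
        _ = (n - 1) * k ^ n := by
            rw [Finset.sum_const, Finset.card_univ, hfc, smul_eq_mul, Nat.mul_comm]
    have h2 : n * k ^ n ≤ ∑ ω : V → Fin k, (2 * k * (Df ω).card) := by
      have hna : ∑ ω : V → Fin k, (2 * k * (Df ω).card)
          = 2 * k * ∑ ω : V → Fin k, (Df ω).card := by
        rw [Finset.mul_sum]
      rw [hna]
      have hpow : k ^ n = k * k ^ (n - 1) := by
        conv_lhs => rw [show n = (n-1) + 1 by omega]
        rw [pow_succ]
        ring
      calc n * k ^ n = k * (n * k ^ (n - 1)) := by rw [hpow]; ring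
        _ ≤ k * (2 * ∑ ω : V → Fin k, (Df ω).card) := Nat.mul_le_mul_left k hglobal
        _ = 2 * k * ∑ ω : V → Fin k, (Df ω).card := by ring
    have hkn : 0 < k ^ n := Nat.pow_pos (by omega)
    have : n * k ^ n ≤ (n - 1) * k ^ n := le_trans h2 h1
    have : n ≤ n - 1 := Nat.le_of_mul_le_mul_right (by omega) hkn
    omega
  obtain ⟨ω, hω⟩ := hfin
  exact ⟨Df ω, fun v hv hpv => htrans ω v (hDfsub ω hv) (hDfsub ω hpv),
    hDfE ω, hω⟩
end Core


def IsAbDom {V : Type*} [Fintype V] [DecidableEq V] (G : SimpleGraph V)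
    [DecidableRel G.Adj] (a b : ℕ) (S : Finset V) : Prop :=
  (∀ v ∈ S, a ≤ (G.neighborFinset v ∩ S).card) ∧
  (∀ v ∉ S, b ≤ (G.neighborFinset v ∩ S).card)

theorem stmt9 {V : Type*} [Fintype V] [DecidableEq V] (G : SimpleGraph V) [DecidableRel G.Adj] (k : ℕ) (hk : 1 ≤ k) (hd : 2 * k - 1 ≤ G.minDegree)
    (hpm : ∃ M : G.Subgraph, M.IsPerfectMatching) :
    ∃ S : Finset V, IsAbDom G (k - 1) k S ∧
      (S.card : ℝ) ≤ ((2 * k - 1 : ℕ) : ℝ) / (2 * k) * Fintype.card V := by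
  classical
  obtain ⟨M, hM⟩ := hpm
  by_cases hV : IsEmpty V
  · refine ⟨∅, ⟨?_, ?_⟩, ?_⟩
    · intro v _; exact (hV.elim v)
    · intro v _; exact (hV.elim v)
    · have : Fintype.card V = 0 := Fintype.card_eq_zero
      simp [this]
  rw [not_isEmpty_iff] at hV
  -- extract partner involution
  have hex : ∀ v : V, ∃ w, M.Adj v w ∧ ∀ u, M.Adj v u → u = w := by
    intro v
    obtain ⟨w, hw, huniq⟩ := hM.1 (hM.2 v)
    exact ⟨w, hw, huniq⟩
  choose p hpadj hpuniq using hex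
  have hGadj : ∀ v, G.Adj v (p v) := fun v => M.adj_sub (hpadj v)
  have hpp : ∀ v, p (p v) = v := fun v => (hpuniq (p v) v (hpadj v).symm).symm
  have hpne : ∀ v, p v ≠ v := fun v => (hGadj v).ne'
  have hpinj : Function.Injective p := by
    intro a b hab
    rw [← hpp a, hab, hpp]
  have hdeg : ∀ v, 2 * k - 1 ≤ G.degree v :=
    fun v => le_trans hd (G.minDegree_le_degree v)
  have hpvmem : ∀ v, p v ∈ G.neighborFinset v := by
    intro v; rw [SimpleGraph.mem_neighborFinset]; exact hGadj v
  -- the set A of edge representatives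
  set e := Fintype.equivFin V with he
  set A : Finset V := Finset.univ.filter (fun v => e v < e (p v)) with hA
  have heiff : ∀ v, v ∈ A ↔ e v < e (p v) := by
    intro v; simp [hA]
  have hAxor : ∀ v, (p v ∈ A) ↔ v ∉ A := by
    intro v
    rw [heiff, heiff, hpp]
    have hne : e v ≠ e (p v) := fun h => (hpne v) (e.injective h).symm
    constructor
    · intro h1 h2; omega
    · intro h1
      rcases lt_or_ge (e v) (e (p v)) with h | h
      · exact absurd h h1
      · omega
  have h2A : 2 * A.card = Fintype.card V := by
    have hcover : Finset.univ = A ∪ A.image p := by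
      ext v
      simp only [Finset.mem_univ, true_iff, Finset.mem_union, Finset.mem_image]
      by_cases hv : v ∈ A
      · exact Or.inl hv
      · refine Or.inr ⟨p v, ?_, hpp v⟩
        rw [hAxor]; exact hv
    have hdisj : Disjoint A (A.image p) := by
      rw [Finset.disjoint_left]
      intro x hx hximg
      obtain ⟨a, ha, rfl⟩ := Finset.mem_image.mp hximg
      exact (hAxor a).mp hx ha
    have hcard : Fintype.card V = A.card + (A.image p).card := by
      rw [← Finset.card_univ, hcover, Finset.card_union_of_disjoint hdisj]
    rw [Finset.card_image_of_injective _ hpinj] at hcard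
    omega
  -- main reduction
  suffices hmain : ∃ D : Finset V, (∀ v ∈ D, p v ∉ D) ∧
      (∀ v : V, k - 1 ≤ (((G.neighborFinset v).erase (p v)) \ D).card) ∧
      Fintype.card V ≤ 2 * k * D.card by
    obtain ⟨D, hQ1, hQ2, hQ3⟩ := hmain
    refine ⟨Finset.univ \ D, ⟨?_, ?_⟩, ?_⟩
    · intro v _
      refine le_trans (hQ2 v) (Finset.card_le_card ?_)
      intro x hx
      rw [Finset.mem_sdiff] at hx
      rw [Finset.mem_inter, Finset.mem_sdiff]
      exact ⟨Finset.mem_of_mem_erase hx.1, Finset.mem_univ x, hx.2⟩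
    · intro v hv
      have hvD : v ∈ D := by
        by_contra hvD
        exact hv (Finset.mem_sdiff.mpr ⟨Finset.mem_univ v, hvD⟩)
      have hsub : insert (p v) (((G.neighborFinset v).erase (p v)) \ D)
          ⊆ G.neighborFinset v ∩ (Finset.univ \ D) := by
        intro x hx
        rw [Finset.mem_insert] at hx
        rw [Finset.mem_inter, Finset.mem_sdiff]
        rcases hx with rfl | hx
        · exact ⟨hpvmem v, Finset.mem_univ _, hQ1 v hvD⟩
        · rw [Finset.mem_sdiff] at hx
          exact ⟨Finset.mem_of_mem_erase hx.1, Finset.mem_univ _, hx.2⟩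
      have hcardins : (insert (p v) (((G.neighborFinset v).erase (p v)) \ D)).card
          = (((G.neighborFinset v).erase (p v)) \ D).card + 1 := by
        rw [Finset.card_insert_of_notMem]
        intro hmem
        rw [Finset.mem_sdiff] at hmem
        exact (Finset.notMem_erase _ _) hmem.1
      have := Finset.card_le_card hsub
      have h2 := hQ2 v
      omega
    · -- cardinality bound
      have hDn : D.card ≤ Fintype.card V := by
        rw [← Finset.card_univ]; exact Finset.card_le_card (Finset.subset_univ D)
      rw [Finset.card_univ_diff]
      have hcast : ((Fintype.card V - D.card : ℕ) : ℝ)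
          = (Fintype.card V : ℝ) - D.card := by
        exact Nat.cast_sub hDn
      rw [hcast]
      have hk2 : ((2 * k - 1 : ℕ) : ℝ) = 2 * (k:ℝ) - 1 := by
        have : (1:ℕ) ≤ 2 * k := by omega
        push_cast [Nat.cast_sub this]
        ring
      rw [hk2]
      have hkpos : (0:ℝ) < 2 * (k:ℝ) := by
        have : (0:ℝ) < (k:ℝ) := by exact_mod_cast hk
        linarith
      rw [div_mul_eq_mul_div, le_div_iff₀ hkpos]
      have hQ3' : (Fintype.card V : ℝ) ≤ 2 * (k:ℝ) * D.card := by
        exact_mod_cast hQ3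
      ring_nf
      nlinarith [hQ3']
  rcases Nat.lt_or_ge k 2 with hk1 | hk2
  · -- k = 1 : a full transversal works
    have hk1' : k = 1 := by omega
    subst hk1'
    refine ⟨A, ?_, ?_, ?_⟩
    · intro v hv hpv
      exact (hAxor v).mp hpv hv
    · intro v
      simp
    · omega
  · exact core_exists G k hk2 hV p hGadj hpp hpinj hdeg A hAxor
      (fun s b hs hb => aux_binom k s b hk2 hs hb)
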